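/- The matrix K is reversible with respect to π; that is, π_x · K_{x,y} = π_y · K_{y,x} for all permutations x and y of {1,…,n}. -/
import Mathlib


open Finset

/-- Off-diagonal entries of the adjacent-transposition chain: `Koff n p x y = p_{ji}/(n-1)`
if `y` is obtained from `x` by swapping the entries in (0-based) positions `r-1` and `r`
for some `1 ≤ r ≤ n-1`, and `0` otherwise. Here `x r` is the entry in position `r`. -/
noncomputable def Koff (n : ℕ) (p : Fin n → Fin n → ℝ)
    (x y : Equiv.Perm (Fin n)) : ℝ :=
  ∑ r : Fin n,
    if 1 ≤ (r : ℕ) ∧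
        y = x * Equiv.swap (⟨(r : ℕ) - 1, Nat.lt_of_le_of_lt (Nat.sub_le _ _) r.isLt⟩ : Fin n) r
    then p (x r) (x ⟨(r : ℕ) - 1, Nat.lt_of_le_of_lt (Nat.sub_le _ _) r.isLt⟩) / ((n : ℝ) - 1)
    else 0

/-- The transition matrix `K` of the adjacent-transposition chain on permutations. -/
noncomputable def Kmat (n : ℕ) (p : Fin n → Fin n → ℝ) :
    Matrix (Equiv.Perm (Fin n)) (Equiv.Perm (Fin n)) ℝ :=
  Matrix.of fun x y =>
    if x = y then 1 - ∑ z ∈ Finset.univ.erase x, Koff n p x z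
    else Koff n p x y

/-- Unnormalized stationary weight `∏_{r<s} p_{x_r,x_s}`. -/
noncomputable def piUn (n : ℕ) (p : Fin n → Fin n → ℝ) (x : Equiv.Perm (Fin n)) : ℝ :=
  ∏ rs ∈ Finset.univ.filter (fun rs : Fin n × Fin n => rs.1 < rs.2), p (x rs.1) (x rs.2)

/-- The stationary distribution `π`. -/
noncomputable def piDist (n : ℕ) (p : Fin n → Fin n → ℝ) (x : Equiv.Perm (Fin n)) : ℝ :=
  (∑ y : Equiv.Perm (Fin n), piUn n p y)⁻¹ * piUn n p x


lemma swap_adj_lt {n : ℕ} (a r : Fin n) (hr : (a:ℕ)+1 = (r:ℕ)) (s t : Fin n)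
    (hst : s < t) (hne : ¬(s = a ∧ t = r)) :
    Equiv.swap a r s < Equiv.swap a r t := by
  simp only [Equiv.swap_apply_def]
  split_ifs <;> (simp only [Fin.lt_def, Fin.ext_iff] at *) <;> omega

lemma piUn_adj_swap {n : ℕ} (p : Fin n → Fin n → ℝ) (x : Equiv.Perm (Fin n))
    (a r : Fin n) (hr : (a:ℕ)+1 = (r:ℕ)) :
    piUn n p x * p (x r) (x a)
      = piUn n p (x * Equiv.swap a r) * p (x a) (x r) := by
  have halt : a < r := by simp only [Fin.lt_def]; omega
  set σ := Equiv.swap a r with hσ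
  have hmem : (a, r) ∈ Finset.univ.filter (fun rs : Fin n × Fin n => rs.1 < rs.2) := by
    simp [halt]
  unfold piUn
  rw [← Finset.mul_prod_erase _ _ hmem, ← Finset.mul_prod_erase _ _ hmem]
  have h1 : (x * σ) a = x r := by simp [hσ]
  have h2 : (x * σ) r = x a := by simp [hσ]
  rw [h1, h2]
  have hprod : ∏ rs ∈ (Finset.univ.filter (fun rs : Fin n × Fin n => rs.1 < rs.2)).erase (a,r),
      p ((x * σ) rs.1) ((x * σ) rs.2)
      = ∏ rs ∈ (Finset.univ.filter (fun rs : Fin n × Fin n => rs.1 < rs.2)).erase (a,r),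
      p (x rs.1) (x rs.2) := by
    apply Finset.prod_nbij' (i := fun rs => (σ rs.1, σ rs.2)) (j := fun rs => (σ rs.1, σ rs.2))
    · intro rs hrs
      simp only [Finset.mem_erase, Finset.mem_filter, Finset.mem_univ, true_and] at hrs ⊢
      obtain ⟨hne, hlt⟩ := hrs
      constructor
      · intro h
        have h1' : rs.1 = r := by
          have := congrArg Prod.fst h
          simpa [hσ] using congrArg σ this
        have h2' : rs.2 = a := by
          have := congrArg Prod.snd h
          simpa [hσ] using congrArg σ this
        rw [h1', h2'] at hlt
        exact absurd (lt_trans hlt halt) (lt_irrefl _)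
      · exact swap_adj_lt a r hr rs.1 rs.2 hlt (fun h => hne (Prod.ext h.1 h.2))
    · intro rs hrs
      simp only [Finset.mem_erase, Finset.mem_filter, Finset.mem_univ, true_and] at hrs ⊢
      obtain ⟨hne, hlt⟩ := hrs
      constructor
      · intro h
        have h1' : rs.1 = r := by
          have := congrArg Prod.fst h
          simpa [hσ] using congrArg σ this
        have h2' : rs.2 = a := by
          have := congrArg Prod.snd h
          simpa [hσ] using congrArg σ this
        rw [h1', h2'] at hlt
        exact absurd (lt_trans hlt halt) (lt_irrefl _)
      · exact swap_adj_lt a r hr rs.1 rs.2 hlt (fun h => hne (Prod.ext h.1 h.2))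
    · intro rs hrs; simp [hσ]
    · intro rs hrs; simp [hσ]
    · intro rs hrs; simp [hσ, Equiv.Perm.mul_apply]
  rw [hprod]; ring

/-- `K` is reversible with respect to `pi`:
`pi_x * K_{x,y} = pi_y * K_{y,x}` for all permutations `x, y`. -/
theorem K_reversible (n : ℕ) (hn : 2 ≤ n) (p : Fin n → Fin n → ℝ)
    (hp : ∀ i j : Fin n, i ≠ j → p i j ∈ Set.Ioo (0 : ℝ) 1)
    (hps : ∀ i j : Fin n, i ≠ j → p i j + p j i = 1)
    (x y : Equiv.Perm (Fin n)) :
    piDist n p x * Kmat n p x y = piDist n p y * Kmat n p y x := by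
  rcases eq_or_ne x y with rfl | hxy
  · rfl
  · unfold Kmat
    simp only [Matrix.of_apply, if_neg hxy, if_neg (Ne.symm hxy)]
    unfold Koff
    rw [Finset.mul_sum, Finset.mul_sum]
    refine Finset.sum_congr rfl fun r _ => ?_
    set a : Fin n := ⟨(r:ℕ) - 1, Nat.lt_of_le_of_lt (Nat.sub_le _ _) r.isLt⟩ with ha
    by_cases hc : 1 ≤ (r:ℕ) ∧ y = x * Equiv.swap a r
    · have hc' : 1 ≤ (r:ℕ) ∧ x = y * Equiv.swap a r := by
        refine ⟨hc.1, ?_⟩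
        rw [hc.2, mul_assoc, Equiv.swap_mul_self, mul_one]
      rw [if_pos hc, if_pos hc']
      have hr : (a:ℕ) + 1 = (r:ℕ) := by
        simp only [ha]
        omega
      have key := piUn_adj_swap p x a r hr
      rw [← hc.2] at key
      have hya : y a = x r := by rw [hc.2]; simp
      have hyr : y r = x a := by rw [hc.2]; simp
      rw [hya, hyr]
      unfold piDist
      have hkey : piUn n p x * p (x r) (x a) = piUn n p y * p (x a) (x r) := key
      linear_combination ((∑ z : Equiv.Perm (Fin n), piUn n p z)⁻¹ / ((n:ℝ) - 1)) * hkey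
    · rw [if_neg hc, if_neg]
      · simp
      · intro h
        exact hc ⟨h.1, by rw [h.2, mul_assoc, Equiv.swap_mul_self, mul_one]⟩
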